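/- Let M be a positively ordered monoid and let d ∈ ℕ with d ≥ 2. (1) If every element of M is divisible by d (for every a ∈ M there exists x ∈ M with a = d·x), then for every a ∈ M and every n ≥ 1 there exists x ∈ M with n·x ≤ a ≤ (n+1)·x. (2) If M is d-unperforated (d·a ≤ d·b implies a ≤ b for all a, b ∈ M), then M is nearly unperforated, and in particular almost unperforated. -/

import Mathlib

/-- A positively ordered monoid is nearly unperforated if `a ≤ b` whenever
`k•a ≤ k•b` for all sufficiently large `k`. -/
def NearlyUnperforated (M : Type*) [AddCommMonoid M] [PartialOrder M] [IsOrderedAddMonoid M] : Prop :=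
  ∀ a b : M, (∃ k₀ : ℕ, ∀ k : ℕ, k₀ ≤ k → k • a ≤ k • b) → a ≤ b

/-- A positively ordered monoid is almost unperforated if `(k+1)•a ≤ k•b` for
some `k` implies `a ≤ b`. -/
def AlmostUnperforated (M : Type*) [AddCommMonoid M] [PartialOrder M] [IsOrderedAddMonoid M] : Prop :=
  ∀ a b : M, (∃ k : ℕ, (k + 1) • a ≤ k • b) → a ≤ b

/-- Scalar monotonicity for nonnegative elements. -/
lemma stmt6_aux_scalar {M : Type*} [AddCommMonoid M] [PartialOrder M] [IsOrderedAddMonoid M] (h0 : ∀ z : M, 0 ≤ z)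
    {m n : ℕ} (h : m ≤ n) (a : M) : m • a ≤ n • a := by
  obtain ⟨k, rfl⟩ := Nat.exists_eq_add_of_le h
  rw [add_nsmul]
  exact le_add_of_nonneg_right (h0 _)

lemma stmt6_aux_elem {M : Type*} [AddCommMonoid M] [PartialOrder M] [IsOrderedAddMonoid M] {a b : M} (h : a ≤ b)
    (n : ℕ) : n • a ≤ n • b := by
  induction n with
  | zero => simp
  | succ k ih =>
    rw [succ_nsmul, succ_nsmul]
    exact add_le_add ih h

/-- Iterated divisibility. -/
lemma stmt6_aux_pow {M : Type*} [AddCommMonoid M] [PartialOrder M] [IsOrderedAddMonoid M] {d : ℕ}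
    (hdiv : ∀ a : M, ∃ x : M, a = d • x) (m : ℕ) (a : M) :
    ∃ y : M, a = d ^ m • y := by
  induction m generalizing a with
  | zero => exact ⟨a, by simp⟩
  | succ k ih =>
    obtain ⟨x, hx⟩ := hdiv a
    obtain ⟨y, hy⟩ := ih x
    exact ⟨y, by rw [hx, hy, ← mul_nsmul, pow_succ, mul_comm]⟩

/-- Let `M` be a positively ordered monoid and let `d ≥ 2`.
(1) If every element of `M` is divisible by `d`, then for every `a ∈ M` and
every `n ≥ 1` there is `x` with `n•x ≤ a ≤ (n+1)•x`.
(2) If `M` is `d`-unperforated, then `M` is nearly unperforated, and in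
particular almost unperforated. -/
theorem stmt6 {M : Type*} [AddCommMonoid M] [PartialOrder M] [IsOrderedAddMonoid M] (h0 : ∀ z : M, 0 ≤ z)
    (d : ℕ) (hd : 2 ≤ d) :
    ((∀ a : M, ∃ x : M, a = d • x) →
      ∀ a : M, ∀ n : ℕ, 1 ≤ n → ∃ x : M, n • x ≤ a ∧ a ≤ (n + 1) • x) ∧
    ((∀ a b : M, d • a ≤ d • b → a ≤ b) →
      NearlyUnperforated M ∧ AlmostUnperforated M) := by
  constructor
  · -- Part 1
    intro hdiv a n hn
    -- choose m with n * n ≤ d ^ m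
    obtain ⟨m, hm⟩ : ∃ m : ℕ, n * n ≤ d ^ m := by
      refine ⟨n * n, ?_⟩
      calc n * n ≤ 2 ^ (n * n) := (Nat.lt_two_pow_self (n := _)).le
        _ ≤ d ^ (n * n) := Nat.pow_le_pow_left hd _
    obtain ⟨y, hy⟩ := stmt6_aux_pow hdiv m a
    set N := d ^ m with hN
    set q := N / n with hq
    have hr : N % n < n := Nat.mod_lt _ hn
    have hqe : n * q + N % n = N := by rw [hq]; exact Nat.div_add_mod N n
    have hql : n - 1 ≤ q := by
      rw [hq, Nat.le_div_iff_mul_le (by omega)]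
      calc (n - 1) * n ≤ n * n := Nat.mul_le_mul_right n (by omega)
        _ ≤ N := hm
    refine ⟨q • y, ?_, ?_⟩
    · rw [hy, ← mul_nsmul]
      exact stmt6_aux_scalar h0 (by rw [Nat.mul_comm]; omega) y
    · rw [hy, ← mul_nsmul]
      exact stmt6_aux_scalar h0 (by nlinarith [hqe, hql, hr, hn]) y
  · -- Part 2
    intro hun
    have hnearly : NearlyUnperforated M := by
      intro a b ⟨k₀, hk⟩
      -- find m with k₀ ≤ d ^ m, then peel off d's
      obtain ⟨m, hm⟩ : ∃ m : ℕ, k₀ ≤ d ^ m :=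
        ⟨k₀, le_trans (Nat.lt_two_pow_self (n := _)).le (Nat.pow_le_pow_left hd _)⟩
      have key : d ^ m • a ≤ d ^ m • b := hk _ hm
      clear hk hm
      induction m with
      | zero => simpa using key
      | succ j ih =>
        apply ih
        apply hun
        rw [← mul_nsmul, ← mul_nsmul, ← pow_succ]
        exact key
    refine ⟨hnearly, ?_⟩
    intro a b ⟨k, hk⟩
    rcases Nat.eq_zero_or_pos k with rfl | hkpos
    · simp only [zero_smul] at hk
      calc a ≤ 0 := by simpa using hk
        _ ≤ b := h0 b
    -- k ≥ 1. First, a ≤ k • b.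
    have hab : a ≤ k • b := by
      calc a ≤ a + k • a := le_add_of_nonneg_right (h0 _)
        _ = (k + 1) • a := by rw [add_comm, ← succ_nsmul]
        _ ≤ k • b := hk
    apply hnearly
    refine ⟨(k + 1) * (k + 1) * k, fun m hm => ?_⟩
    -- write m = j * (k+1) + i with i < k+1
    set j := m / (k + 1) with hj
    set i := m % (k + 1) with hi
    have hilt : i < k + 1 := Nat.mod_lt _ (by omega)
    have hme : (k + 1) * j + i = m := Nat.div_add_mod m (k + 1)
    have hjbig : i * k ≤ j + i := by
      have : (k + 1) * (k + 1) * k ≤ (k + 1) * j + i := hme ▸ hm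
      nlinarith [Nat.mod_lt m (show 0 < k + 1 by omega)]
    calc m • a = ((k + 1) * j + i) • a := by rw [hme]
      _ = j • ((k + 1) • a) + i • a := by
          rw [add_nsmul, mul_nsmul]
      _ ≤ j • (k • b) + i • (k • b) := by
          exact add_le_add (stmt6_aux_elem hk j) (stmt6_aux_elem hab i)
      _ = (k * (j + i)) • b := by rw [← add_nsmul, ← mul_nsmul]
      _ ≤ m • b := stmt6_aux_scalar h0 (by nlinarith) b
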